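/- Let d₁, α₁, α₃, α₄ be reals and set α₂ = 0, β₁ = −16d₁ + α₃, β₃ = 2α₁α₃(α₃ − 2(4+α₄))/((α₃−8)(40d₁+6α₁−α₃)), d₃ = (α₃ − 2α₄ − 2β₃)/8, κ₁ = α₁(α₃−24)(α₃−6)/(α₄(α₃−8)(α₃−40d₁)), κ₂ = (α₃(6−α₃+2α₄)/(α₁(α₃−6)))·κ₁ (assume all denominators nonzero). Then u(t,x) = ¼(1−tanh(x−(α₃/4)t))², v(t,x) = 1 + ((24−α₃)/(2(α₃−8)))(1−tanh²(x−(α₃/4)t)), w(t,x) = ((α₃−40d₁)/(4α₁))(1−tanh²(x−(α₃/4)t)) is an exact solution of the system u_t = d₁u_xx + β₁u(1−u) − α₁uw + α₂uv, v_t = v_xx + v(1−v) + (κ₁α₃+κ₂α₁)uw − (κ₂α₂u+κ₁α₄w)v, w_t = d₃w_xx + β₃w(1−w) − α₃uw + α₄vw. -/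

import Mathlib

open Real

noncomputable def pdt (f : ℝ → ℝ → ℝ) (t x : ℝ) : ℝ := deriv (fun s => f s x) t

noncomputable def pdxx (f : ℝ → ℝ → ℝ) (t x : ℝ) : ℝ := deriv (deriv (f t)) x

/-- The rescaled language-competition system (1-4). -/
def LangSys (d₁ d₃ β₁ β₃ α₁ α₂ α₃ α₄ κ₁ κ₂ : ℝ) (u v w : ℝ → ℝ → ℝ) : Prop :=
  ∀ t x : ℝ,
    pdt u t x = d₁ * pdxx u t x + β₁ * u t x * (1 - u t x)
        - α₁ * u t x * w t x + α₂ * u t x * v t x ∧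
    pdt v t x = pdxx v t x + v t x * (1 - v t x)
        + (κ₁ * α₃ + κ₂ * α₁) * u t x * w t x
        - (κ₂ * α₂ * u t x + κ₁ * α₄ * w t x) * v t x ∧
    pdt w t x = d₃ * pdxx w t x + β₃ * w t x * (1 - w t x)
        - α₃ * u t x * w t x + α₄ * v t x * w t x

lemma myHasDerivAt_tanh (y : ℝ) :
    HasDerivAt Real.tanh (1 - Real.tanh y ^ 2) y := by
  have hc : Real.cosh y ≠ 0 := (Real.cosh_pos y).ne'
  have h : HasDerivAt (fun z => Real.sinh z / Real.cosh z)
      ((Real.cosh y * Real.cosh y - Real.sinh y * Real.sinh y) / Real.cosh y ^ 2) y :=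
    (Real.hasDerivAt_sinh y).div (Real.hasDerivAt_cosh y) hc
  have hfun : (fun z => Real.sinh z / Real.cosh z) = Real.tanh := by
    funext z; rw [Real.tanh_eq_sinh_div_cosh]
  have hval : (Real.cosh y * Real.cosh y - Real.sinh y * Real.sinh y) / Real.cosh y ^ 2
      = 1 - Real.tanh y ^ 2 := by
    rw [Real.tanh_eq_sinh_div_cosh]
    have hid := Real.cosh_sq_sub_sinh_sq y
    field_simp
  rw [hfun, hval] at h
  exact h

/-- derivative of a quadratic in tanh -/
lemma quadTanh_hasDerivAt (a b c y : ℝ) :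
    HasDerivAt (fun z => a + b * Real.tanh z + c * Real.tanh z ^ 2)
      ((b + 2 * c * Real.tanh y) * (1 - Real.tanh y ^ 2)) y := by
  have h1 := myHasDerivAt_tanh y
  have h2 : HasDerivAt (fun z => a + b * Real.tanh z + c * Real.tanh z ^ 2)
      (b * (1 - Real.tanh y ^ 2) + c * (2 * Real.tanh y ^ 1 * (1 - Real.tanh y ^ 2))) y :=
    (((h1.const_mul b).const_add a)).add ((h1.pow 2).const_mul c)
  convert h2 using 1
  ring

/-- derivative of the first-derivative profile -/
lemma quadTanh_deriv2 (b c y : ℝ) :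
    HasDerivAt (fun z => (b + 2 * c * Real.tanh z) * (1 - Real.tanh z ^ 2))
      (2 * c * (1 - Real.tanh y ^ 2) ^ 2
        - (b + 2 * c * Real.tanh y) * (2 * Real.tanh y * (1 - Real.tanh y ^ 2))) y := by
  have h1 := myHasDerivAt_tanh y
  have hL : HasDerivAt (fun z => b + 2 * c * Real.tanh z) (2 * c * (1 - Real.tanh y ^ 2)) y :=
    (h1.const_mul (2 * c)).const_add b
  have hR : HasDerivAt (fun z => 1 - Real.tanh z ^ 2)
      (-(2 * Real.tanh y ^ 1 * (1 - Real.tanh y ^ 2))) y := (h1.pow 2).const_sub 1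
  have h2 : HasDerivAt (fun z => (b + 2 * c * Real.tanh z) * (1 - Real.tanh z ^ 2)) _ y := hL.mul hR
  convert h2 using 1
  ring

lemma pdt_eq (f : ℝ → ℝ → ℝ) (a b c μ : ℝ)
    (hf : ∀ t x, f t x = a + b * Real.tanh (x - μ * t) + c * Real.tanh (x - μ * t) ^ 2)
    (t x : ℝ) :
    pdt f t x = -μ * ((b + 2 * c * Real.tanh (x - μ * t))
        * (1 - Real.tanh (x - μ * t) ^ 2)) := by
  unfold pdt
  have hfe : (fun s => f s x)
      = fun s => a + b * Real.tanh (x - μ * s) + c * Real.tanh (x - μ * s) ^ 2 :=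
    funext fun s => hf s x
  rw [hfe]
  have hin : HasDerivAt (fun s : ℝ => x - μ * s) (-μ) t := by
    simpa using ((hasDerivAt_id t).const_mul μ).const_sub x
  have h2 : HasDerivAt (fun s => a + b * Real.tanh (x - μ * s) + c * Real.tanh (x - μ * s) ^ 2)
      ((b + 2 * c * Real.tanh (x - μ * t)) * (1 - Real.tanh (x - μ * t) ^ 2) * -μ) t :=
    by have := (quadTanh_hasDerivAt a b c (x - μ * t)).comp t hin; exact this
  rw [h2.deriv]
  ring

lemma pdxx_eq (f : ℝ → ℝ → ℝ) (a b c μ : ℝ)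
    (hf : ∀ t x, f t x = a + b * Real.tanh (x - μ * t) + c * Real.tanh (x - μ * t) ^ 2)
    (t x : ℝ) :
    pdxx f t x = 2 * c * (1 - Real.tanh (x - μ * t) ^ 2) ^ 2
      - (b + 2 * c * Real.tanh (x - μ * t))
        * (2 * Real.tanh (x - μ * t) * (1 - Real.tanh (x - μ * t) ^ 2)) := by
  unfold pdxx
  have hd1 : deriv (f t)
      = fun y => (b + 2 * c * Real.tanh (y - μ * t)) * (1 - Real.tanh (y - μ * t) ^ 2) := by
    funext y
    have hfe : f t = fun y => a + b * Real.tanh (y - μ * t) + c * Real.tanh (y - μ * t) ^ 2 :=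
      funext fun y => hf t y
    rw [hfe]
    have hin : HasDerivAt (fun y : ℝ => y - μ * t) 1 y := (hasDerivAt_id y).sub_const (μ * t)
    have h2 : HasDerivAt (fun y => a + b * Real.tanh (y - μ * t) + c * Real.tanh (y - μ * t) ^ 2)
        ((b + 2 * c * Real.tanh (y - μ * t)) * (1 - Real.tanh (y - μ * t) ^ 2) * 1) y :=
      by have := (quadTanh_hasDerivAt a b c (y - μ * t)).comp y hin; exact this
    rw [h2.deriv]; ring
  rw [hd1]
  have hin : HasDerivAt (fun y : ℝ => y - μ * t) 1 x := (hasDerivAt_id x).sub_const (μ * t)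
  have h2 : HasDerivAt (fun y => (b + 2 * c * Real.tanh (y - μ * t)) * (1 - Real.tanh (y - μ * t) ^ 2))
      ((2 * c * (1 - Real.tanh (x - μ * t) ^ 2) ^ 2
        - (b + 2 * c * Real.tanh (x - μ * t))
          * (2 * Real.tanh (x - μ * t) * (1 - Real.tanh (x - μ * t) ^ 2))) * 1) x :=
    by have := (quadTanh_deriv2 b c (x - μ * t)).comp x hin; exact this
  rw [h2.deriv]; ring

set_option maxHeartbeats 2000000 in
theorem exact_solution_2_12
    (d₁ α₁ α₃ α₄ α₂ β₁ β₃ d₃ κ₁ κ₂ : ℝ)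
    (hα₁ : α₁ ≠ 0) (hα₄ : α₄ ≠ 0)
    (h8 : α₃ - 8 ≠ 0) (h6 : α₃ - 6 ≠ 0)
    (hden₁ : 40 * d₁ + 6 * α₁ - α₃ ≠ 0)
    (hden₂ : α₃ - 40 * d₁ ≠ 0)
    (hα₂ : α₂ = 0)
    (hβ₁ : β₁ = -16 * d₁ + α₃)
    (hβ₃ : β₃ = 2 * α₁ * α₃ * (α₃ - 2 * (4 + α₄)) /
        ((α₃ - 8) * (40 * d₁ + 6 * α₁ - α₃)))
    (hd₃ : d₃ = (α₃ - 2 * α₄ - 2 * β₃) / 8)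
    (hκ₁ : κ₁ = α₁ * (α₃ - 24) * (α₃ - 6) /
        (α₄ * (α₃ - 8) * (α₃ - 40 * d₁)))
    (hκ₂ : κ₂ = α₃ * (6 - α₃ + 2 * α₄) / (α₁ * (α₃ - 6)) * κ₁) :
    LangSys d₁ d₃ β₁ β₃ α₁ α₂ α₃ α₄ κ₁ κ₂
      (fun t x => 1 / 4 * (1 - Real.tanh (x - α₃ / 4 * t)) ^ 2)
      (fun t x => 1 + (24 - α₃) / (2 * (α₃ - 8)) *
          (1 - Real.tanh (x - α₃ / 4 * t) ^ 2))
      (fun t x => (α₃ - 40 * d₁) / (4 * α₁) *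
          (1 - Real.tanh (x - α₃ / 4 * t) ^ 2)) := by
  subst hα₂ hd₃ hβ₃ hκ₂ hκ₁ hβ₁
  intro t x
  rw [pdt_eq _ (1/4) (-(1/2)) (1/4) (α₃/4) (by intro s y; ring) t x,
      pdxx_eq _ (1/4) (-(1/2)) (1/4) (α₃/4) (by intro s y; ring) t x,
      pdt_eq _ (1 + (24 - α₃) / (2 * (α₃ - 8))) 0 (-((24 - α₃) / (2 * (α₃ - 8)))) (α₃/4)
        (by intro s y; ring) t x,
      pdxx_eq _ (1 + (24 - α₃) / (2 * (α₃ - 8))) 0 (-((24 - α₃) / (2 * (α₃ - 8)))) (α₃/4)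
        (by intro s y; ring) t x,
      pdt_eq _ ((α₃ - 40 * d₁) / (4 * α₁)) 0 (-((α₃ - 40 * d₁) / (4 * α₁))) (α₃/4)
        (by intro s y; ring) t x,
      pdxx_eq _ ((α₃ - 40 * d₁) / (4 * α₁)) 0 (-((α₃ - 40 * d₁) / (4 * α₁))) (α₃/4)
        (by intro s y; ring) t x]
  beta_reduce
  generalize Real.tanh (x - α₃ / 4 * t) = T
  refine ⟨?_, ?_, ?_⟩
  · field_simp [hα₁, hα₄, h8, h6, hden₁, hden₂]
    ring
  · field_simp [hα₁, hα₄, h8, h6, hden₁, hden₂]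
    ring
  · field_simp [hα₁, hα₄, h8, h6, hden₁, hden₂, (show 40 * d₁ + α₁ * 6 - α₃ ≠ 0 by rwa [mul_comm α₁])]
    ring
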